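/- Let λ ∈ ℝ^n be dominant (λ_1 ≥ … ≥ λ_n) and ℓ := (1/n)Σ_{i=1}^n λ_i. Let m = (m_1,…,m_N) ∈ (K_{>0})^N and let x : V → K_{>0} satisfy: x((k,k)) = t^{λ_k} for k = 1,…,n; x((i,j))/x((i+1,j)) = R_{ij}(m) for every vertical arrow (1 ≤ j ≤ i ≤ n−1); and the critical point conditions at every dot vertex. Then the assignment n_{ij} := Val_K(m_{s_i+j−i}) for 1 ≤ i < j ≤ n is an ideal filling for λ. -/

import Mathlib

noncomputable section

variable {K : Type*} [Field K]

/-- `s_k := Σ_{j=1}^{k-1} (n - j)`. -/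
def sIdx (n k : ℕ) : ℕ := ∑ j ∈ Finset.range (k - 1), (n - (j + 1))

/-- The critical point condition of the GL_n quiver at a dot vertex `(i,j)` (so `1 ≤ j < i ≤ n`),
for a decoration `x` of the vertices: the sum of the values `x(head)/x(tail)` of the arrows
with head `(i,j)` equals the corresponding sum over the arrows with tail `(i,j)`.  The incoming
arrows are the vertical one from `(i+1,j)` (present iff `i < n`) and the horizontal one from
`(i,j+1)`; the outgoing arrows are the vertical one to `(i-1,j)` and the horizontal one to
`(i,j-1)` (present iff `2 ≤ j`). -/
def critCond (n : ℕ) (x : ℕ → ℕ → K) (i j : ℕ) : Prop :=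
  (if i < n then x i j / x (i + 1) j else 0) + x i j / x i (j + 1)
    = x (i - 1) j / x i j + (if 2 ≤ j then x i (j - 1) / x i j else 0)

/-- The ideal-coordinate decoration: the prescribed value `R_{ij}(m)` of the vertical arrow
with head `(i,j)`. -/
def Rarr (n : ℕ) (m : ℕ → K) (i j : ℕ) : K :=
  (∏ r ∈ Finset.range j, m (sIdx n (j - r) + (i - j + 1 + r))) /
    (∏ r ∈ Finset.range (j - 1), m (sIdx n (j - 1 - r) + (i - j + 1 + r)))

/-- `Ξ_i`: product of the vertex values along the `i`-th diagonal (with `Ξ_{n+1} = 1`). -/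
def Xi (n : ℕ) (x : ℕ → ℕ → K) (i : ℕ) : K :=
  ∏ l ∈ Finset.Icc 1 (n + 1 - i), x (i - 1 + l) l

/-- The field of (generalized) Puiseux series, formalized as Hahn series over `ℝ` with
complex coefficients. -/
abbrev PS : Type := HahnSeries ℝ ℂ

/-- The positive part `K_{>0}`: nonzero series whose lowest-order coefficient is a positive
real number. -/
def PSpos (c : PS) : Prop := c ≠ 0 ∧ ∃ r : ℝ, 0 < r ∧ c.coeff c.order = (r : ℂ)


def nuF (n : ℕ) (m : ℕ → PS) (p c : ℕ) : ℝ := (m (sIdx n p + (c - p))).order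

def vF (x : ℕ → ℕ → PS) (i j : ℕ) : ℝ := (x i j).order

namespace Helper14

open Finset HahnSeries

lemma pspos_lead {a : PS} (ha : PSpos a) : ∃ r : ℝ, 0 < r ∧ a.leadingCoeff = (r : ℂ) := by
  obtain ⟨-, r, hr, h⟩ := ha
  exact ⟨r, hr, by rwa [leadingCoeff_eq]⟩

lemma pspos_of_lead {a : PS} (h0 : a ≠ 0) (h : ∃ r : ℝ, 0 < r ∧ a.leadingCoeff = (r : ℂ)) :
    PSpos a := by
  obtain ⟨r, hr, h⟩ := h
  exact ⟨h0, r, hr, by rwa [leadingCoeff_eq] at h⟩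

lemma pspos_mul {a b : PS} (ha : PSpos a) (hb : PSpos b) :
    PSpos (a * b) ∧ (a * b).order = a.order + b.order := by
  obtain ⟨ra, hra, hla⟩ := pspos_lead ha
  obtain ⟨rb, hrb, hlb⟩ := pspos_lead hb
  have hne : a * b ≠ 0 := mul_ne_zero ha.1 hb.1
  have hord : (a * b).order = a.order + b.order := order_mul ha.1 hb.1
  refine ⟨⟨hne, ra * rb, mul_pos hra hrb, ?_⟩, hord⟩
  rw [hord, coeff_mul_order_add_order, hla, hlb]
  push_cast
  ring

lemma pspos_inv {a : PS} (ha : PSpos a) : PSpos a⁻¹ ∧ a⁻¹.order = -a.order := by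
  obtain ⟨ra, hra, hla⟩ := pspos_lead ha
  have hne : a⁻¹ ≠ 0 := inv_ne_zero ha.1
  have hmul : a⁻¹ * a = 1 := inv_mul_cancel₀ ha.1
  have hord : a⁻¹.order + a.order = 0 := by
    rw [← order_mul hne ha.1, hmul, order_one]
  have hcoeff : a⁻¹.leadingCoeff * a.leadingCoeff = 1 := by
    have := coeff_mul_order_add_order a⁻¹ a
    rw [hmul] at this
    rw [← this]
    have h0 : a⁻¹.order + a.order = 0 := hord
    rw [h0]
    simp
  refine ⟨pspos_of_lead hne ⟨ra⁻¹, inv_pos.mpr hra, ?_⟩, by linarith⟩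
  rw [hla] at hcoeff
  rw [eq_inv_of_mul_eq_one_left hcoeff]
  push_cast
  ring

lemma pspos_div {a b : PS} (ha : PSpos a) (hb : PSpos b) :
    PSpos (a / b) ∧ (a / b).order = a.order - b.order := by
  obtain ⟨hbi, hbo⟩ := pspos_inv hb
  obtain ⟨hm, ho⟩ := pspos_mul ha hbi
  rw [div_eq_mul_inv]
  exact ⟨hm, by rw [ho, hbo]; ring⟩

lemma pspos_add {a b : PS} (ha : PSpos a) (hb : PSpos b) :
    PSpos (a + b) ∧ (a + b).order = min a.order b.order := by
  obtain ⟨ra, hra, hla⟩ := pspos_lead ha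
  obtain ⟨rb, hrb, hlb⟩ := pspos_lead hb
  rcases lt_trichotomy a.order b.order with h | h | h
  · have hot : a.orderTop < b.orderTop := by
      rw [← order_eq_orderTop_of_ne_zero ha.1, ← order_eq_orderTop_of_ne_zero hb.1]
      exact_mod_cast h
    have h1 : (a + b).orderTop = a.orderTop := orderTop_add_eq_left hot
    have hne : a + b ≠ 0 := by
      intro hz
      rw [hz, orderTop_zero, ← order_eq_orderTop_of_ne_zero ha.1] at h1
      exact (WithTop.coe_ne_top h1.symm)
    have hord : (a + b).order = a.order := by
      have := h1
      rw [← order_eq_orderTop_of_ne_zero hne, ← order_eq_orderTop_of_ne_zero ha.1] at this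
      exact_mod_cast this
    have hlc : (a + b).leadingCoeff = a.leadingCoeff := leadingCoeff_add_eq_left hot
    refine ⟨pspos_of_lead hne ⟨ra, hra, by rw [hlc, hla]⟩, by rw [hord, min_eq_left h.le]⟩
  · have hcoeff : (a + b).coeff a.order = ((ra + rb : ℝ) : ℂ) := by
      rw [HahnSeries.coeff_add]
      have h2 : b.coeff a.order = (rb : ℂ) := by
        rw [h, ← leadingCoeff_eq, hlb]
      rw [← leadingCoeff_eq, hla, h2]
      push_cast; ring
    have hcne : (a + b).coeff a.order ≠ 0 := by
      rw [hcoeff]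
      exact_mod_cast Complex.ofReal_ne_zero.mpr (by positivity)
    have hne : a + b ≠ 0 := by
      intro hz; rw [hz] at hcne; simp at hcne
    have hord : (a + b).order = a.order := by
      refine le_antisymm (order_le_of_coeff_ne_zero hcne) ?_
      have := min_order_le_order_add hne (x := a) (y := b)
      rwa [← h, min_self] at this
    refine ⟨⟨hne, ra + rb, by positivity, by rw [hord, hcoeff]⟩, by rw [hord, ← h, min_self]⟩
  · have hot : b.orderTop < a.orderTop := by
      rw [← order_eq_orderTop_of_ne_zero ha.1, ← order_eq_orderTop_of_ne_zero hb.1]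
      exact_mod_cast h
    have h1 : (a + b).orderTop = b.orderTop := orderTop_add_eq_right hot
    have hne : a + b ≠ 0 := by
      intro hz
      rw [hz, orderTop_zero, ← order_eq_orderTop_of_ne_zero hb.1] at h1
      exact (WithTop.coe_ne_top h1.symm)
    have hord : (a + b).order = b.order := by
      have := h1
      rw [← order_eq_orderTop_of_ne_zero hne, ← order_eq_orderTop_of_ne_zero hb.1] at this
      exact_mod_cast this
    have hlc : (a + b).leadingCoeff = b.leadingCoeff := leadingCoeff_add_eq_right hot
    refine ⟨pspos_of_lead hne ⟨rb, hrb, by rw [hlc, hlb]⟩, by rw [hord, min_eq_right h.le]⟩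

lemma pspos_one : PSpos (1 : PS) :=
  ⟨one_ne_zero, 1, one_pos, by rw [order_one]; simp⟩

lemma pspos_prod {ι : Type*} (s : Finset ι) (f : ι → PS) (h : ∀ i ∈ s, PSpos (f i)) :
    PSpos (∏ i ∈ s, f i) ∧ (∏ i ∈ s, f i).order = ∑ i ∈ s, (f i).order := by
  classical
  induction s using Finset.induction_on with
  | empty => simpa using pspos_one
  | insert _ _ hni ih =>
    rename_i i s
    rw [Finset.prod_insert hni, Finset.sum_insert hni]
    obtain ⟨hp, ho⟩ := ih (fun j hj => h j (Finset.mem_insert_of_mem hj))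
    obtain ⟨hm, hmo⟩ := pspos_mul (h i (Finset.mem_insert_self i s)) hp
    exact ⟨hm, by rw [hmo, ho]⟩

lemma sum_Icc_top (f : ℕ → ℝ) {a b : ℕ} (h : a ≤ b + 1) :
    ∑ x ∈ Icc a (b + 1), f x = ∑ x ∈ Icc a b, f x + f (b + 1) := by
  rw [← Finset.insert_Icc_right_eq_Icc_add_one h, Finset.sum_insert (by simp)]
  ring

lemma sum_Icc_bot (f : ℕ → ℝ) {a b : ℕ} (h : a ≤ b) :
    ∑ x ∈ Icc a b, f x = f a + ∑ x ∈ Icc (a + 1) b, f x := by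
  rw [← Finset.insert_Icc_add_one_left_eq_Icc h, Finset.sum_insert (by simp)]

lemma sum_shift (f : ℕ → ℝ) (j : ℕ) :
    ∑ r ∈ range j, f (r + 1) = ∑ p ∈ Icc 1 j, f p := by
  induction j with
  | zero => simp
  | succ j ih => rw [Finset.sum_range_succ, ih, sum_Icc_top f (by omega)]

lemma sum_reflect (f : ℕ → ℝ) (j : ℕ) :
    ∑ r ∈ range j, f (j - r) = ∑ p ∈ Icc 1 j, f p := by
  rw [← sum_shift f j, ← Finset.sum_range_reflect (fun r => f (r + 1)) j]
  apply Finset.sum_congr rfl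
  intro r hr
  simp only [Finset.mem_range] at hr
  congr 1
  omega

lemma triangle_swap (N : ℕ) (g : ℕ → ℕ → ℝ) :
    ∑ k ∈ Icc 1 N, ∑ c ∈ Icc (k + 1) N, g k c
      = ∑ k ∈ Icc 1 N, ∑ p ∈ Icc 1 (k - 1), g p k := by
  induction N with
  | zero => simp
  | succ N ih =>
    have hL : ∑ k ∈ Icc 1 (N + 1), ∑ c ∈ Icc (k + 1) (N + 1), g k c
        = (∑ k ∈ Icc 1 N, ∑ c ∈ Icc (k + 1) N, g k c) + ∑ k ∈ Icc 1 N, g k (N + 1) := by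
      rw [sum_Icc_top (fun k => ∑ c ∈ Icc (k + 1) (N + 1), g k c) (by omega)]
      rw [show Icc (N + 1 + 1) (N + 1) = ∅ by rw [Finset.Icc_eq_empty]; omega]
      rw [← Finset.sum_add_distrib]
      simp only [Finset.sum_empty, add_zero]
      apply Finset.sum_congr rfl
      intro k hk
      simp only [Finset.mem_Icc] at hk
      rw [sum_Icc_top (fun c => g k c) (by omega)]
    have hR : ∑ k ∈ Icc 1 (N + 1), ∑ p ∈ Icc 1 (k - 1), g p k
        = (∑ k ∈ Icc 1 N, ∑ p ∈ Icc 1 (k - 1), g p k) + ∑ p ∈ Icc 1 N, g p (N + 1) := by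
      rw [sum_Icc_top (fun k => ∑ p ∈ Icc 1 (k - 1), g p k) (by omega)]
      simp
    rw [hL, hR, ih]

lemma sIdx_succ {n k : ℕ} (hk : 1 ≤ k) : sIdx n (k + 1) = sIdx n k + (n - k) := by
  obtain ⟨k', rfl⟩ := Nat.exists_eq_add_of_le hk
  show sIdx n (1 + k' + 1) = _
  unfold sIdx
  rw [show 1 + k' + 1 - 1 = (1 + k' - 1) + 1 by omega, Finset.sum_range_succ]
  congr 2
  omega

lemma sIdx_double (n : ℕ) : 2 * sIdx n n = n * (n - 1) := by
  unfold sIdx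
  rcases Nat.eq_zero_or_pos n with rfl | hn
  · simp
  obtain ⟨m, rfl⟩ := Nat.exists_eq_add_of_le hn
  have hrefl := Finset.sum_range_reflect (fun j => (1 + m) - (j + 1)) ((1 + m) - 1)
  have h1 : ∑ j ∈ Finset.range ((1 + m) - 1), ((1 + m) - (((1+m) - 1) - 1 - j + 1))
      = ∑ j ∈ Finset.range ((1 + m) - 1), (j + 1) := by
    apply Finset.sum_congr rfl
    intro j hj
    simp only [Finset.mem_range] at hj
    omega
  rw [h1] at hrefl
  have h2 : 2 * (∑ j ∈ Finset.range ((1+m) - 1), ((1+m) - (j+1)))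
      = (∑ j ∈ Finset.range ((1+m)-1), ((1+m) - (j+1))) + ∑ j ∈ Finset.range ((1+m)-1), (j+1) := by
    rw [← hrefl]; ring
  rw [h2, ← Finset.sum_add_distrib]
  have h3 : ∀ j ∈ Finset.range ((1+m) - 1), ((1+m) - (j+1)) + (j+1) = 1 + m := by
    intro j hj; simp only [Finset.mem_range] at hj; omega
  rw [Finset.sum_congr rfl h3, Finset.sum_const, Finset.card_range, smul_eq_mul, Nat.mul_comm]

lemma sIdx_bound {n k a : ℕ} (hk : 1 ≤ k) (hk' : k ≤ n - 1) (ha : 1 ≤ a) (ha' : a ≤ n - k) :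
    1 ≤ sIdx n k + a ∧ sIdx n k + a ≤ n * (n - 1) / 2 := by
  refine ⟨by omega, ?_⟩
  have h1 : sIdx n k + a ≤ sIdx n (k + 1) := by rw [sIdx_succ hk]; omega
  have h2 : sIdx n (k + 1) ≤ sIdx n n := by
    unfold sIdx
    apply Finset.sum_le_sum_of_subset
    apply Finset.range_subset_range.mpr
    omega
  have h3 := sIdx_double n
  omega

lemma sum_Icc_top' (f : ℕ → ℝ) {a b : ℕ} (ha : a ≤ b) (hb : 1 ≤ b) :
    ∑ x ∈ Icc a b, f x = ∑ x ∈ Icc a (b - 1), f x + f b := by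
  obtain ⟨b', rfl⟩ : ∃ b', b = b' + 1 := ⟨b - 1, by omega⟩
  rw [sum_Icc_top f (by omega)]
  simp

lemma core (n : ℕ) (ν : ℕ → ℕ → ℝ)
    (hcond : ∀ i j, 1 ≤ j → j < i → i ≤ n - 1 →
      0 ≤ (∑ p ∈ Icc 1 j, (ν p (i + 1) - ν p i)) ∧
      0 ≤ (∑ c ∈ Icc (i + 1) n, (ν j c - ν (j + 1) c)) ∧
      min (∑ p ∈ Icc 1 j, (ν p (i + 1) - ν p i))
        (∑ c ∈ Icc (i + 1) n, (ν j c - ν (j + 1) c)) = 0) :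
    ∀ p c, 1 ≤ p → p + 2 ≤ c → c ≤ n →
      ν p (c - 1) ≤ ν p c ∧ ν (p + 1) c ≤ ν p c ∧
        (ν p c = ν p (c - 1) ∨ ν p c = ν (p + 1) c) := by
  suffices H : ∀ k p c, 1 ≤ p → p + 2 ≤ c → c ≤ n → n ≤ (c - p) + k →
      ν p (c - 1) ≤ ν p c ∧ ν (p + 1) c ≤ ν p c ∧
        (ν p c = ν p (c - 1) ∨ ν p c = ν (p + 1) c) by
    intro p c hp hpc hcn
    exact H n p c hp hpc hcn (by omega)
  intro k
  induction k with
  | zero => intro p c hp hpc hcn hgap; omega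
  | succ k IH =>
    intro p c hp hpc hcn hgap
    have e1 : c - 1 + 1 = c := by omega
    -- Part A
    have hA : ν p (c - 1) ≤ ν p c := by
      rcases Nat.lt_or_ge p 2 with hp2 | hp2
      · -- p = 1
        have hp1 : p = 1 := by omega
        subst hp1
        have h := (hcond (c - 1) 1 le_rfl (by omega) (by omega)).1
        rw [e1] at h
        simpa using h
      · by_contra hA'
        push_neg at hA'
        have e3 : p - 1 + 1 = p := by omega
        -- T(c-1, p) ≥ 0
        have h1 := (hcond (c - 1) p hp (by omega) (by omega)).1
        rw [e1] at h1
        have hTsplit : ∑ q ∈ Icc 1 p, (ν q c - ν q (c - 1))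
            = ∑ q ∈ Icc 1 (p - 1), (ν q c - ν q (c - 1)) + (ν p c - ν p (c - 1)) :=
          sum_Icc_top' _ (by omega) (by omega)
        have key0 : 0 < ∑ q ∈ Icc 1 (p - 1), (ν q c - ν q (c - 1)) := by
          rw [hTsplit] at h1; linarith
        have hcond2 := hcond (c - 1) (p - 1) (by omega) (by omega) (by omega)
        rw [e1, e3] at hcond2
        have hS2 : ∑ c' ∈ Icc c n, (ν (p - 1) c' - ν p c') = 0 := by
          rcases min_cases (∑ q ∈ Icc 1 (p - 1), (ν q c - ν q (c - 1)))
            (∑ c' ∈ Icc c n, (ν (p - 1) c' - ν p c')) with ⟨hm, hle⟩ | ⟨hm, hle⟩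
          · rw [hm] at hcond2; linarith [hcond2.2.2]
          · rw [hm] at hcond2; exact hcond2.2.2
        have hterm : ∀ c' ∈ Icc c n, 0 ≤ ν (p - 1) c' - ν p c' := by
          intro c' hc'
          rw [mem_Icc] at hc'
          have := (IH (p - 1) c' (by omega) (by omega) (by omega) (by omega)).2.1
          rw [e3] at this
          linarith
        have hzero := (Finset.sum_eq_zero_iff_of_nonneg hterm).mp hS2
        have heqc : ν (p - 1) c - ν p c = 0 := hzero c (by rw [mem_Icc]; omega)
        -- Q_{p-1,c-1} ≥ 0
        have hcond3 := hcond (c - 2) (p - 1) (by omega) (by omega) (by omega)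
        have e2 : c - 2 + 1 = c - 1 := by omega
        rw [e2, e3] at hcond3
        have hS3 := hcond3.2.1
        have hS3split : ∑ c' ∈ Icc (c - 1) n, (ν (p - 1) c' - ν p c')
            = (ν (p - 1) (c - 1) - ν p (c - 1))
              + ∑ c' ∈ Icc c n, (ν (p - 1) c' - ν p c') := by
          rw [sum_Icc_bot _ (show c - 1 ≤ n by omega), e1]
        have hq : 0 ≤ ν (p - 1) (c - 1) - ν p (c - 1) := by
          rw [hS3split, hS2] at hS3; linarith
        have hIA := (IH (p - 1) c (by omega) (by omega) (by omega) (by omega)).1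
        linarith
    -- Part B
    have hB : ν (p + 1) c ≤ ν p c := by
      rcases Nat.eq_or_lt_of_le hcn with hcn' | hcn'
      · subst hcn'
        have h := (hcond (c - 1) p hp (by omega) (by omega)).2.1
        rw [e1] at h
        have : Icc c c = {c} := Icc_self c
        rw [this, Finset.sum_singleton] at h
        linarith
      · -- c ≤ n - 1
        by_contra hB'
        push_neg at hB'
        have h1 := (hcond (c - 1) p hp (by omega) (by omega)).2.1
        rw [e1] at h1
        have hSsplit : ∑ c' ∈ Icc c n, (ν p c' - ν (p + 1) c')
            = (ν p c - ν (p + 1) c) + ∑ c' ∈ Icc (c + 1) n, (ν p c' - ν (p + 1) c') :=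
          sum_Icc_bot _ (by omega)
        have key0 : 0 < ∑ c' ∈ Icc (c + 1) n, (ν p c' - ν (p + 1) c') := by
          rw [hSsplit] at h1; linarith
        have hcond4 := hcond c p hp (by omega) (by omega)
        have hT4 : ∑ q ∈ Icc 1 p, (ν q (c + 1) - ν q c) = 0 := by
          rcases min_cases (∑ q ∈ Icc 1 p, (ν q (c + 1) - ν q c))
            (∑ c' ∈ Icc (c + 1) n, (ν p c' - ν (p + 1) c')) with ⟨hm, hle⟩ | ⟨hm, hle⟩
          · rw [hm] at hcond4; exact hcond4.2.2
          · rw [hm] at hcond4; linarith [hcond4.2.2]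
        have hterm : ∀ q ∈ Icc 1 p, 0 ≤ ν q (c + 1) - ν q c := by
          intro q hq
          rw [mem_Icc] at hq
          have := (IH q (c + 1) (by omega) (by omega) (by omega) (by omega)).1
          have e4 : c + 1 - 1 = c := by omega
          rw [e4] at this
          linarith
        have hzero := (Finset.sum_eq_zero_iff_of_nonneg hterm).mp hT4
        have heqp : ν p (c + 1) - ν p c = 0 := hzero p (by rw [mem_Icc]; omega)
        have hT5 := (hcond c (p + 1) (by omega) (by omega) (by omega)).1
        have hT5split : ∑ q ∈ Icc 1 (p + 1), (ν q (c + 1) - ν q c)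
            = ∑ q ∈ Icc 1 p, (ν q (c + 1) - ν q c) + (ν (p + 1) (c + 1) - ν (p + 1) c) :=
          sum_Icc_top _ (by omega)
        have hq5 : 0 ≤ ν (p + 1) (c + 1) - ν (p + 1) c := by
          rw [hT5split, hT4] at hT5; linarith
        have hIB := (IH p (c + 1) hp (by omega) (by omega) (by omega)).2.1
        linarith
    refine ⟨hA, hB, ?_⟩
    -- Part M
    have hcondM := hcond (c - 1) p hp (by omega) (by omega)
    rw [e1] at hcondM
    rcases min_cases (∑ q ∈ Icc 1 p, (ν q c - ν q (c - 1)))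
      (∑ c' ∈ Icc c n, (ν p c' - ν (p + 1) c')) with ⟨hm, hle⟩ | ⟨hm, hle⟩
    · left
      have hT0 : ∑ q ∈ Icc 1 p, (ν q c - ν q (c - 1)) = 0 := by
        rw [hm] at hcondM; exact hcondM.2.2
      have hterm : ∀ q ∈ Icc 1 p, 0 ≤ ν q c - ν q (c - 1) := by
        intro q hq
        rw [mem_Icc] at hq
        rcases Nat.eq_or_lt_of_le hq.2 with rfl | hlt
        · linarith
        · have := (IH q c (by omega) (by omega) (by omega) (by omega)).1
          linarith
      have := (Finset.sum_eq_zero_iff_of_nonneg hterm).mp hT0 p (by rw [mem_Icc]; omega)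
      linarith
    · right
      have hS0 : ∑ c' ∈ Icc c n, (ν p c' - ν (p + 1) c') = 0 := by
        rw [hm] at hcondM; exact hcondM.2.2
      have hterm : ∀ c' ∈ Icc c n, 0 ≤ ν p c' - ν (p + 1) c' := by
        intro c' hc'
        rw [mem_Icc] at hc'
        rcases Nat.eq_or_lt_of_le hc'.1 with rfl | hlt
        · linarith
        · have := (IH p c' (by omega) (by omega) (by omega) (by omega)).2.1
          linarith
      have := (Finset.sum_eq_zero_iff_of_nonneg hterm).mp hS0 c (by rw [mem_Icc]; omega)
      linarith

lemma min_shift (X Z H : ℝ) : min X (H + X - Z) = X - Z + min Z H := by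
  rcases le_total Z H with h | h
  · rw [min_eq_left h, min_eq_left (by linarith)]; ring
  · rw [min_eq_right h, min_eq_right (by linarith)]; ring

lemma sum_Icc_split (f : ℕ → ℝ) : ∀ (a m b : ℕ), a ≤ m + 1 → m ≤ b →
    ∑ x ∈ Icc a b, f x = ∑ x ∈ Icc a m, f x + ∑ x ∈ Icc (m + 1) b, f x := by
  intro a m b ham hmb
  have key : ∀ d, ∑ x ∈ Icc a (m + d), f x
      = ∑ x ∈ Icc a m, f x + ∑ x ∈ Icc (m + 1) (m + d), f x := by
    intro d
    induction d with
    | zero => simp [Finset.Icc_eq_empty_of_lt (by omega : m < m + 1)]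
    | succ d ih =>
      rw [show m + (d + 1) = (m + d) + 1 by omega, sum_Icc_top f (by omega),
        sum_Icc_top f (by omega), ih]
      ring
  have := key (b - m)
  rwa [show m + (b - m) = b by omega] at this

lemma telescope (f : ℕ → ℝ) {a b : ℕ} (h : a ≤ b + 1) :
    ∑ j ∈ Icc a b, (f j - f (j + 1)) = f a - f (b + 1) := by
  induction b with
  | zero =>
    rcases Nat.le_one_iff_eq_zero_or_eq_one.mp h with rfl | rfl
    · simp
    · simp
  | succ b ih =>
    rcases Nat.lt_or_ge a (b + 2) with h' | h'
    · rw [sum_Icc_top _ (by omega), ih (by omega)]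
      ring
    · have : a = b + 2 := by omega
      subst this
      simp

lemma nonnegSuper (n : ℕ) (hn : 2 ≤ n) (ν : ℕ → ℕ → ℝ) (lam : ℕ → ℝ)
    (hdom : ∀ i, 1 ≤ i → i + 1 ≤ n → lam (i + 1) ≤ lam i)
    (habm : ∀ p c, 1 ≤ p → p + 2 ≤ c → c ≤ n →
      ν p (c - 1) ≤ ν p c ∧ ν (p + 1) c ≤ ν p c ∧
        (ν p c = ν p (c - 1) ∨ ν p c = ν (p + 1) c))
    (hchainA : ∀ p c c', 1 ≤ p → p < c → c ≤ c' → c' ≤ n → ν p c ≤ ν p c')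
    (hchainB : ∀ p p' c, 1 ≤ p → p ≤ p' → p' < c → c ≤ n → ν p' c ≤ ν p c)
    (hu_le : ∀ p r c, 1 ≤ p → p ≤ r → r < c → c ≤ n → ν r (r + 1) ≤ ν p c)
    (hU2 : ∀ p c, 1 ≤ p → p < c → c ≤ n → ∃ r, p ≤ r ∧ r < c ∧ ν p c = ν r (r + 1))
    (hlam : ∀ j, 1 ≤ j → j ≤ n - 1 → lam j - lam (j + 1) =
      (∑ c ∈ Icc (j + 1) n, ν j c - ∑ p ∈ Icc 1 (j - 1), ν p j)
        - (∑ c ∈ Icc (j + 2) n, ν (j + 1) c - ∑ p ∈ Icc 1 j, ν p (j + 1))) :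
    ∀ q, 1 ≤ q → q + 1 ≤ n → 0 ≤ ν q (q + 1) := by
  intro q₀ hq1 hq2
  by_contra h0
  push_neg at h0
  -- the maximal negative run [a, b] around q₀
  set Aset : Finset ℕ := (Icc 1 q₀).filter (fun a => ∀ r ∈ Icc a q₀, ν r (r + 1) < 0) with hAset
  have hq₀A : q₀ ∈ Aset := by
    rw [hAset, mem_filter, mem_Icc]
    refine ⟨⟨hq1, le_rfl⟩, ?_⟩
    intro r hr
    rw [mem_Icc] at hr
    have : r = q₀ := by omega
    rwa [this]
  have hAne : Aset.Nonempty := ⟨q₀, hq₀A⟩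
  set a := Aset.min' hAne with ha
  have haA : a ∈ Aset := Aset.min'_mem hAne
  have ha1 : 1 ≤ a ∧ a ≤ q₀ := by
    have := haA; rw [hAset, mem_filter, mem_Icc] at this; exact this.1
  have haneg : ∀ r, a ≤ r → r ≤ q₀ → ν r (r + 1) < 0 := by
    have := haA; rw [hAset, mem_filter] at this
    intro r h1 h2
    exact this.2 r (by rw [mem_Icc]; omega)
  set Bset : Finset ℕ := (Icc q₀ (n - 1)).filter (fun b => ∀ r ∈ Icc q₀ b, ν r (r + 1) < 0)
    with hBset
  have hq₀B : q₀ ∈ Bset := by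
    rw [hBset, mem_filter, mem_Icc]
    refine ⟨⟨le_rfl, by omega⟩, ?_⟩
    intro r hr
    rw [mem_Icc] at hr
    have : r = q₀ := by omega
    rwa [this]
  have hBne : Bset.Nonempty := ⟨q₀, hq₀B⟩
  set b := Bset.max' hBne with hb
  have hbB : b ∈ Bset := Bset.max'_mem hBne
  have hb1 : q₀ ≤ b ∧ b ≤ n - 1 := by
    have := hbB; rw [hBset, mem_filter, mem_Icc] at this; exact this.1
  have hbneg : ∀ r, q₀ ≤ r → r ≤ b → ν r (r + 1) < 0 := by
    have := hbB; rw [hBset, mem_filter] at this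
    intro r h1 h2
    exact this.2 r (by rw [mem_Icc]; omega)
  have hneg : ∀ r, a ≤ r → r ≤ b → ν r (r + 1) < 0 := by
    intro r h1 h2
    rcases Nat.lt_or_ge r q₀ with h | h
    · exact haneg r h1 (by omega)
    · exact hbneg r h (by omega)
  have hableft : 2 ≤ a → 0 ≤ ν (a - 1) a := by
    intro h2a
    by_contra hneg'
    push_neg at hneg'
    have hmem : a - 1 ∈ Aset := by
      rw [hAset, mem_filter, mem_Icc]
      refine ⟨⟨by omega, by omega⟩, ?_⟩
      intro r hr
      rw [mem_Icc] at hr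
      rcases Nat.eq_or_lt_of_le hr.1 with he | hlt
      · rw [← he]
        rwa [show a - 1 + 1 = a by omega]
      · exact haneg r (by omega) hr.2
    have := Aset.min'_le _ hmem
    omega
  have hbright : b + 2 ≤ n → 0 ≤ ν (b + 1) (b + 2) := by
    intro h2b
    by_contra hneg'
    push_neg at hneg'
    have hmem : b + 1 ∈ Bset := by
      rw [hBset, mem_filter, mem_Icc]
      refine ⟨⟨by omega, by omega⟩, ?_⟩
      intro r hr
      rw [mem_Icc] at hr
      rcases Nat.lt_or_ge r (b + 1) with hlt | hge
      · exact hbneg r hr.1 (by omega)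
      · have : r = b + 1 := by omega
        rwa [this]
    have := Bset.le_max' _ hmem
    omega
  -- (iii)
  have hiii : ∀ c, a + 1 ≤ c → c ≤ b + 1 → ν a c < 0 := by
    intro c h1 h2
    obtain ⟨r, hr1, hr2, hr3⟩ := hU2 a c ha1.1 (by omega) (by omega)
    rw [hr3]
    exact hneg r hr1 (by omega)
  -- (iv)
  have hiv : ∀ p, a ≤ p → p ≤ b → ν p (b + 1) < 0 := by
    intro p h1 h2
    obtain ⟨r, hr1, hr2, hr3⟩ := hU2 p (b + 1) (by omega) (by omega) (by omega)
    rw [hr3]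
    exact hneg r (by omega) (by omega)
  -- (i) : for c ≥ b+2, ν a c = ν (b+1) c
  have histep : ∀ c p, b + 2 ≤ c → c ≤ n → a ≤ p → p ≤ b → ν p c = ν (p + 1) c := by
    intro c p hc1 hc2 hp1 hp2
    have hub1 : 0 ≤ ν (b + 1) (b + 2) := hbright (by omega)
    have hge : 0 ≤ ν p c := by
      have h1 : ν (b + 1) (b + 2) ≤ ν p c := hu_le p (b + 1) c (by omega) (by omega) (by omega) hc2
      linarith
    obtain ⟨r, hr1, hr2, hr3⟩ := hU2 p c (by omega) (by omega) hc2
    have hrb : b + 1 ≤ r := by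
      by_contra hrb'
      push_neg at hrb'
      have : ν r (r + 1) < 0 := hneg r (by omega) (by omega)
      rw [hr3] at hge
      linarith
    have h4 : ν r (r + 1) ≤ ν (p + 1) c := hu_le (p + 1) r c (by omega) (by omega) hr2 hc2
    have h5 : ν (p + 1) c ≤ ν p c := hchainB p (p + 1) c (by omega) (by omega) (by omega) hc2
    rw [hr3]
    linarith [hr3 ▸ h4]
  have hi : ∀ c, b + 2 ≤ c → c ≤ n → ν a c = ν (b + 1) c := by
    intro c hc1 hc2
    have key : ∀ d, a + d ≤ b + 1 → ν a c = ν (a + d) c := by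
      intro d
      induction d with
      | zero => intro _; rfl
      | succ d ih =>
        intro hd
        rw [ih (by omega), histep c (a + d) hc1 hc2 (by omega) (by omega)]
        ring_nf
    have := key (b + 1 - a) (by omega)
    rwa [show a + (b + 1 - a) = b + 1 by omega] at this
  -- (ii) : for p ≤ a - 1, ν p a = ν p (b+1)
  have hii : ∀ p, 1 ≤ p → p + 1 ≤ a → ν p a = ν p (b + 1) := by
    intro p hp1 hp2
    have hua : 0 ≤ ν (a - 1) a := hableft (by omega)
    have hge : 0 ≤ ν p (b + 1) := by
      have h1 : ν (a - 1) ((a - 1) + 1) ≤ ν p (b + 1) :=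
        hu_le p (a - 1) (b + 1) hp1 (by omega) (by omega) (by omega)
      rw [show a - 1 + 1 = a by omega] at h1
      linarith
    obtain ⟨r, hr1, hr2, hr3⟩ := hU2 p (b + 1) hp1 (by omega) (by omega)
    have hra : r + 1 ≤ a := by
      by_contra hra'
      push_neg at hra'
      have : ν r (r + 1) < 0 := hneg r (by omega) (by omega)
      rw [hr3] at hge
      linarith
    have h4 : ν r (r + 1) ≤ ν p a := hu_le p r a hp1 hr1 (by omega) (by omega)
    have h5 : ν p a ≤ ν p (b + 1) := hchainA p a (b + 1) hp1 (by omega) (by omega) (by omega)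
    rw [hr3]
    linarith [hr3 ▸ h4]
  -- dominance chain
  have hdomchain : lam (b + 1) ≤ lam a := by
    have key : ∀ d, a + d ≤ n → lam (a + d) ≤ lam a := by
      intro d
      induction d with
      | zero => intro _; exact le_rfl
      | succ d ih =>
        intro hd
        have h1 : lam (a + d + 1) ≤ lam (a + d) := hdom (a + d) (by omega) (by omega)
        have h2 := ih (by omega)
        calc lam (a + (d + 1)) = lam (a + d + 1) := by ring_nf
          _ ≤ lam (a + d) := h1
          _ ≤ lam a := h2
    have := key (b + 1 - a) (by omega)
    rwa [show a + (b + 1 - a) = b + 1 by omega] at this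
  -- telescoping
  set Row : ℕ → ℝ := fun k => ∑ c ∈ Icc (k + 1) n, ν k c - ∑ p ∈ Icc 1 (k - 1), ν p k with hRow
  have htel : lam a - lam (b + 1) = Row a - Row (b + 1) := by
    have h1 : ∑ j ∈ Icc a b, (lam j - lam (j + 1)) = lam a - lam (b + 1) :=
      telescope lam (by omega)
    have h2 : ∑ j ∈ Icc a b, (Row j - Row (j + 1)) = Row a - Row (b + 1) :=
      telescope Row (by omega)
    rw [← h1, ← h2]
    apply Finset.sum_congr rfl
    intro j hj
    rw [mem_Icc] at hj
    have h3 := hlam j (by omega) (by omega)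
    have e : j + 1 - 1 = j := by omega
    simp only [hRow, e]
    linarith [h3]
  -- computing Row a - Row (b+1)
  have hsplit1 : ∑ c ∈ Icc (a + 1) n, ν a c
      = ∑ c ∈ Icc (a + 1) (b + 1), ν a c + ∑ c ∈ Icc (b + 2) n, ν a c := by
    exact sum_Icc_split _ (a + 1) (b + 1) n (by omega) (by omega)
  have hsplit2 : ∑ p ∈ Icc 1 b, ν p (b + 1)
      = ∑ p ∈ Icc 1 (a - 1), ν p (b + 1) + ∑ p ∈ Icc a b, ν p (b + 1) := by
    have := sum_Icc_split (fun p => ν p (b + 1)) 1 (a - 1) b (by omega) (by omega)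
    rwa [show a - 1 + 1 = a by omega] at this
  have hcongr1 : ∑ c ∈ Icc (b + 2) n, ν a c = ∑ c ∈ Icc (b + 2) n, ν (b + 1) c := by
    apply Finset.sum_congr rfl
    intro c hc
    rw [mem_Icc] at hc
    exact hi c hc.1 hc.2
  have hcongr2 : ∑ p ∈ Icc 1 (a - 1), ν p (b + 1) = ∑ p ∈ Icc 1 (a - 1), ν p a := by
    apply Finset.sum_congr rfl
    intro p hp
    rw [mem_Icc] at hp
    exact (hii p hp.1 (by omega)).symm
  have hRowval : Row a - Row (b + 1)
      = ∑ c ∈ Icc (a + 1) (b + 1), ν a c + ∑ p ∈ Icc a b, ν p (b + 1) := by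
    simp only [hRow]
    rw [show b + 1 - 1 = b by omega, show b + 1 + 1 = b + 2 by omega]
    rw [hsplit1, hsplit2, hcongr1, hcongr2]
    ring
  have hneg1 : ∑ c ∈ Icc (a + 1) (b + 1), ν a c < 0 := by
    have hne : (Icc (a + 1) (b + 1)).Nonempty := by
      rw [Finset.nonempty_Icc]; omega
    calc ∑ c ∈ Icc (a + 1) (b + 1), ν a c < ∑ c ∈ Icc (a + 1) (b + 1), (0 : ℝ) := by
          apply Finset.sum_lt_sum_of_nonempty hne
          intro c hc
          rw [mem_Icc] at hc
          exact hiii c hc.1 hc.2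
      _ = 0 := by simp
  have hneg2 : ∑ p ∈ Icc a b, ν p (b + 1) < 0 := by
    have hne : (Icc a b).Nonempty := by
      rw [Finset.nonempty_Icc]; omega
    calc ∑ p ∈ Icc a b, ν p (b + 1) < ∑ p ∈ Icc a b, (0 : ℝ) := by
          apply Finset.sum_lt_sum_of_nonempty hne
          intro p hp
          rw [mem_Icc] at hp
          exact hiv p hp.1 hp.2
      _ = 0 := by simp
  have : lam a - lam (b + 1) < 0 := by
    rw [htel, hRowval]
    linarith
  linarith

section Chains

variable (n : ℕ) (ν : ℕ → ℕ → ℝ)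
  (habm : ∀ p c, 1 ≤ p → p + 2 ≤ c → c ≤ n →
      ν p (c - 1) ≤ ν p c ∧ ν (p + 1) c ≤ ν p c ∧
        (ν p c = ν p (c - 1) ∨ ν p c = ν (p + 1) c))

include habm

lemma chainA : ∀ p c c', 1 ≤ p → p < c → c ≤ c' → c' ≤ n → ν p c ≤ ν p c' := by
  have key : ∀ d p c, 1 ≤ p → p < c → c + d ≤ n → ν p c ≤ ν p (c + d) := by
    intro d
    induction d with
    | zero => intro p c _ _ _; simp
    | succ d ih =>
      intro p c hp hpc hcd
      have h := (habm p (c + d + 1) hp (by omega) (by omega)).1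
      have e : c + d + 1 - 1 = c + d := by omega
      rw [e] at h
      have h2 := ih p c hp hpc (by omega)
      calc ν p c ≤ ν p (c + d) := h2
        _ ≤ ν p (c + d + 1) := h
        _ = ν p (c + (d + 1)) := by ring_nf
  intro p c c' hp hpc hcc' hc'n
  have := key (c' - c) p c hp hpc (by omega)
  rwa [show c + (c' - c) = c' by omega] at this

lemma chainB : ∀ p p' c, 1 ≤ p → p ≤ p' → p' < c → c ≤ n → ν p' c ≤ ν p c := by
  have key : ∀ d p c, 1 ≤ p → p + d < c → c ≤ n → ν (p + d) c ≤ ν p c := by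
    intro d
    induction d with
    | zero => intro p c _ _ _; simp
    | succ d ih =>
      intro p c hp hpd hcn
      have h1 : ν (p + d + 1) c ≤ ν (p + d) c :=
        (habm (p + d) c (by omega) (by omega) hcn).2.1
      have h2 := ih p c hp (by omega) hcn
      calc ν (p + (d + 1)) c = ν (p + d + 1) c := by ring_nf
        _ ≤ ν (p + d) c := h1
        _ ≤ ν p c := h2
  intro p p' c hp hpp' hp'c hcn
  have := key (p' - p) p c hp (by omega) hcn
  rwa [show p + (p' - p) = p' by omega] at this

lemma u_le : ∀ p r c, 1 ≤ p → p ≤ r → r < c → c ≤ n → ν r (r + 1) ≤ ν p c := by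
  intro p r c hp hpr hrc hcn
  calc ν r (r + 1) ≤ ν r c := chainA n ν habm r (r + 1) c (by omega) (by omega) (by omega) hcn
    _ ≤ ν p c := chainB n ν habm p r c hp hpr hrc hcn

lemma U2 : ∀ p c, 1 ≤ p → p < c → c ≤ n → ∃ r, p ≤ r ∧ r < c ∧ ν p c = ν r (r + 1) := by
  have key : ∀ g p c, 1 ≤ p → p < c → c ≤ n → c ≤ p + g →
      ∃ r, p ≤ r ∧ r < c ∧ ν p c = ν r (r + 1) := by
    intro g
    induction g with
    | zero => intro p c _ h _ h'; omega
    | succ g ih =>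
      intro p c hp hpc hcn hcg
      rcases Nat.eq_or_lt_of_le hpc with he | hlt
      · exact ⟨p, le_rfl, hpc, by rw [← he]⟩
      · have hM := (habm p c hp (by omega) hcn).2.2
        rcases hM with h | h
        · obtain ⟨r, hr1, hr2, hr3⟩ := ih p (c - 1) hp (by omega) (by omega) (by omega)
          exact ⟨r, hr1, by omega, by rw [h, hr3]⟩
        · obtain ⟨r, hr1, hr2, hr3⟩ := ih (p + 1) c (by omega) (by omega) hcn (by omega)
          exact ⟨r, by omega, hr2, by rw [h, hr3]⟩
  intro p c hp hpc hcn
  exact key c p c hp hpc hcn (by omega)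

end Chains

lemma goal3 (n : ℕ) (hn : 2 ≤ n) (ν : ℕ → ℕ → ℝ) (lam : ℕ → ℝ) (ell : ℝ)
    (hell : ell = (∑ i ∈ Icc 1 n, lam i) / n)
    (hlam : ∀ j, 1 ≤ j → j ≤ n - 1 → lam j - lam (j + 1) =
      (∑ c ∈ Icc (j + 1) n, ν j c - ∑ p ∈ Icc 1 (j - 1), ν p j)
        - (∑ c ∈ Icc (j + 2) n, ν (j + 1) c - ∑ p ∈ Icc 1 j, ν p (j + 1))) :
    ∀ k, 1 ≤ k → k ≤ n →
      (∑ j ∈ Icc (k + 1) n, ν k j) - (∑ i ∈ Icc 1 (k - 1), ν i k) + ell = lam k := by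
  set Row : ℕ → ℝ := fun k => ∑ c ∈ Icc (k + 1) n, ν k c - ∑ p ∈ Icc 1 (k - 1), ν p k with hRow
  have hstep : ∀ j, 1 ≤ j → j ≤ n - 1 → lam j - Row j = lam (j + 1) - Row (j + 1) := by
    intro j h1 h2
    have hl := hlam j h1 h2
    have hRj : Row j = ∑ c ∈ Icc (j + 1) n, ν j c - ∑ p ∈ Icc 1 (j - 1), ν p j := rfl
    have hRj1 : Row (j + 1) = ∑ c ∈ Icc (j + 2) n, ν (j + 1) c - ∑ p ∈ Icc 1 j, ν p (j + 1) := by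
      simp only [hRow]
      rw [show j + 1 + 1 = j + 2 by omega, show j + 1 - 1 = j by omega]
    rw [hRj, hRj1] at *
    linarith
  have hconst : ∀ k, 1 ≤ k → k ≤ n → lam k - Row k = lam 1 - Row 1 := by
    have key : ∀ d, 1 + d ≤ n → lam (1 + d) - Row (1 + d) = lam 1 - Row 1 := by
      intro d
      induction d with
      | zero => intro _; rfl
      | succ d ih =>
        intro hd
        have h1 := hstep (1 + d) (by omega) (by omega)
        have h2 := ih (by omega)
        rw [show 1 + (d + 1) = (1 + d) + 1 by omega, ← h1, h2]
    intro k h1 h2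
    have := key (k - 1) (by omega)
    rwa [show 1 + (k - 1) = k by omega] at this
  have hRowsum : ∑ k ∈ Icc 1 n, Row k = 0 := by
    simp only [hRow]
    rw [Finset.sum_sub_distrib, triangle_swap n (fun p c => ν p c)]
    ring
  have hcard : (Icc 1 n).card = n := by rw [Nat.card_Icc]; omega
  have hsum1 : ∑ k ∈ Icc 1 n, (lam k - Row k) = ∑ k ∈ Icc 1 n, lam k := by
    rw [Finset.sum_sub_distrib, hRowsum, sub_zero]
  have hsum2 : ∑ k ∈ Icc 1 n, (lam k - Row k) = n * (lam 1 - Row 1) := by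
    have hc : ∀ k ∈ Icc 1 n, lam k - Row k = lam 1 - Row 1 := by
      intro k hk
      rw [mem_Icc] at hk
      exact hconst k hk.1 hk.2
    rw [Finset.sum_congr rfl hc, Finset.sum_const, hcard, nsmul_eq_mul]
  have hnpos : (0 : ℝ) < n := by
    have : (0 : ℕ) < n := by omega
    exact_mod_cast this
  have hell' : (n : ℝ) * ell = ∑ k ∈ Icc 1 n, lam k := by
    rw [hell]
    field_simp
  have hl1 : lam 1 - Row 1 = ell := by
    have h := hsum2.symm.trans hsum1
    rw [← hell'] at h
    exact mul_left_cancel₀ (ne_of_gt hnpos) (by linarith)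
  intro k h1 h2
  have hk := (hconst k h1 h2).trans hl1
  have hRk : Row k = ∑ c ∈ Icc (k + 1) n, ν k c - ∑ p ∈ Icc 1 (k - 1), ν p k := rfl
  rw [hRk] at hk
  linarith

section Bridge

variable (n : ℕ) (hn : 2 ≤ n) (lam : ℕ → ℝ)
  (m : ℕ → PS) (hm : ∀ r, 1 ≤ r → r ≤ n * (n - 1) / 2 → PSpos (m r))
  (x : ℕ → ℕ → PS) (hx : ∀ i j, 1 ≤ j → j ≤ i → i ≤ n → PSpos (x i j))
  (hstar : ∀ k, 1 ≤ k → k ≤ n → x k k = HahnSeries.single (lam k) 1)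
  (hvert : ∀ i j, 1 ≤ j → j ≤ i → i ≤ n - 1 → x i j / x (i + 1) j = Rarr n m i j)
  (hcrit : ∀ i j, 1 ≤ j → j < i → i ≤ n → critCond n x i j)


include hn hm hx hvert in
lemma bridge_vert : ∀ i j, 1 ≤ j → j ≤ i → i ≤ n - 1 →
    vF x i j - vF x (i + 1) j
      = (∑ p ∈ Icc 1 j, nuF n m p (i + 1)) - (∑ p ∈ Icc 1 (j - 1), nuF n m p i) := by
  intro i j h1 h2 h3
  simp only [nuF, vF]
  have hx1 : PSpos (x i j) := hx i j h1 h2 (by omega)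
  have hx2 : PSpos (x (i + 1) j) := hx (i + 1) j h1 (by omega) (by omega)
  have hnum : ∀ r ∈ range j, PSpos (m (sIdx n (j - r) + (i - j + 1 + r))) := by
    intro r hr
    rw [mem_range] at hr
    have hb := sIdx_bound (n := n) (k := j - r) (a := i - j + 1 + r)
      (by omega) (by omega) (by omega) (by omega)
    exact hm _ hb.1 hb.2
  have hden : ∀ r ∈ range (j - 1), PSpos (m (sIdx n (j - 1 - r) + (i - j + 1 + r))) := by
    intro r hr
    rw [mem_range] at hr
    have hb := sIdx_bound (n := n) (k := j - 1 - r) (a := i - j + 1 + r)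
      (by omega) (by omega) (by omega) (by omega)
    exact hm _ hb.1 hb.2
  have hnp := pspos_prod _ _ hnum
  have hdp := pspos_prod _ _ hden
  have hdiv := pspos_div hnp.1 hdp.1
  have h0 : (x i j / x (i + 1) j).order = (x i j).order - (x (i + 1) j).order :=
    (pspos_div hx1 hx2).2
  rw [hvert i j h1 h2 h3] at h0
  rw [← h0]
  show (Rarr n m i j).order = _
  unfold Rarr
  rw [hdiv.2, hnp.2, hdp.2]
  congr 1
  · have : ∀ r ∈ range j, (m (sIdx n (j - r) + (i - j + 1 + r))).order
        = (fun p => (m (sIdx n p + (i + 1 - p))).order) (j - r) := by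
      intro r hr
      rw [mem_range] at hr
      have : i - j + 1 + r = i + 1 - (j - r) := by omega
      rw [this]
    rw [Finset.sum_congr rfl this, sum_reflect (fun p => (m (sIdx n p + (i + 1 - p))).order) j]
  · have : ∀ r ∈ range (j - 1), (m (sIdx n (j - 1 - r) + (i - j + 1 + r))).order
        = (fun p => (m (sIdx n p + (i - p))).order) (j - 1 - r) := by
      intro r hr
      rw [mem_range] at hr
      have : i - j + 1 + r = i - (j - 1 - r) := by omega
      rw [this]
    rw [Finset.sum_congr rfl this, sum_reflect (fun p => (m (sIdx n p + (i - p))).order) (j - 1)]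

include hstar in
lemma bridge_star : ∀ k, 1 ≤ k → k ≤ n → vF x k k = lam k := by
  intro k h1 h2
  show (x k k).order = lam k
  rw [hstar k h1 h2]
  exact order_single one_ne_zero

include hn hx hcrit in
lemma bridge_crit1 : ∀ i, 1 < i → i ≤ n →
    (i ≤ n - 1 → min (vF x i 1 - vF x (i + 1) 1) (vF x i 1 - vF x i 2) = vF x (i - 1) 1 - vF x i 1) ∧
    (i = n → vF x i 1 - vF x i 2 = vF x (i - 1) 1 - vF x i 1) := by
  intro i hi1 hi2
  simp only [vF]
  have hc := hcrit i 1 le_rfl hi1 hi2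
  unfold critCond at hc
  rw [if_neg (by omega : ¬ 2 ≤ 1)] at hc
  have hq2 := pspos_div (hx i 1 (by omega) (by omega) (by omega))
    (hx i 2 (by omega) (by omega) (by omega))
  have hq3 := pspos_div (hx (i - 1) 1 (by omega) (by omega) (by omega))
    (hx i 1 (by omega) (by omega) (by omega))
  constructor
  · intro hin
    rw [if_pos (by omega : i < n)] at hc
    have hq1 := pspos_div (hx i 1 (by omega) (by omega) (by omega))
      (hx (i + 1) 1 (by omega) (by omega) (by omega))
    have h12 := pspos_add hq1.1 hq2.1
    have horder := congrArg HahnSeries.order hc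
    rw [add_zero, h12.2, hq1.2, hq2.2, hq3.2] at horder
    exact horder
  · intro hin
    rw [if_neg (by omega : ¬ i < n), zero_add, add_zero] at hc
    have horder := congrArg HahnSeries.order hc
    rw [hq2.2, hq3.2] at horder
    exact horder

include hn hx hcrit in
lemma bridge_crit2 : ∀ i j, 2 ≤ j → j < i → i ≤ n →
    (i ≤ n - 1 → min (vF x i j - vF x (i + 1) j) (vF x i j - vF x i (j + 1))
      = min (vF x (i - 1) j - vF x i j) (vF x i (j - 1) - vF x i j)) ∧
    (i = n → vF x i j - vF x i (j + 1)
      = min (vF x (i - 1) j - vF x i j) (vF x i (j - 1) - vF x i j)) := by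
  intro i j hj2 hji hin
  simp only [vF]
  have hc := hcrit i j (by omega) hji hin
  unfold critCond at hc
  rw [if_pos hj2] at hc
  have hq2 := pspos_div (hx i j (by omega) (by omega) (by omega))
    (hx i (j + 1) (by omega) (by omega) (by omega))
  have hq3 := pspos_div (hx (i - 1) j (by omega) (by omega) (by omega))
    (hx i j (by omega) (by omega) (by omega))
  have hq4 := pspos_div (hx i (j - 1) (by omega) (by omega) (by omega))
    (hx i j (by omega) (by omega) (by omega))
  have h34 := pspos_add hq3.1 hq4.1
  constructor
  · intro hin'
    rw [if_pos (by omega : i < n)] at hc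
    have hq1 := pspos_div (hx i j (by omega) (by omega) (by omega))
      (hx (i + 1) j (by omega) (by omega) (by omega))
    have h12 := pspos_add hq1.1 hq2.1
    have horder := congrArg HahnSeries.order hc
    rw [h12.2, h34.2, hq1.2, hq2.2, hq3.2, hq4.2] at horder
    exact horder
  · intro hin'
    rw [if_neg (by omega : ¬ i < n), zero_add] at hc
    have horder := congrArg HahnSeries.order hc
    rw [h34.2, hq2.2, hq3.2, hq4.2] at horder
    exact horder

end Bridge

section Bridge2

variable (n : ℕ) (hn : 2 ≤ n) (m : ℕ → PS) (x : ℕ → ℕ → PS)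
  (hvK : ∀ i j, 1 ≤ j → j ≤ i → i ≤ n - 1 →
    vF x i j - vF x (i + 1) j
      = (∑ p ∈ Icc 1 j, nuF n m p (i + 1)) - (∑ p ∈ Icc 1 (j - 1), nuF n m p i))
  (hcrit1 : ∀ i, 1 < i → i ≤ n →
    (i ≤ n - 1 → min (vF x i 1 - vF x (i + 1) 1) (vF x i 1 - vF x i 2)
        = vF x (i - 1) 1 - vF x i 1) ∧
    (i = n → vF x i 1 - vF x i 2 = vF x (i - 1) 1 - vF x i 1))
  (hcrit2 : ∀ i j, 2 ≤ j → j < i → i ≤ n →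
    (i ≤ n - 1 → min (vF x i j - vF x (i + 1) j) (vF x i j - vF x i (j + 1))
      = min (vF x (i - 1) j - vF x i j) (vF x i (j - 1) - vF x i j)) ∧
    (i = n → vF x i j - vF x i (j + 1)
      = min (vF x (i - 1) j - vF x i j) (vF x i (j - 1) - vF x i j)))

include hn hvK hcrit1 hcrit2 in
lemma bridge_B1 : ∀ j, 1 ≤ j → ∀ i, j < i → i ≤ n →
    (i ≤ n - 1 → min (vF x i j - vF x (i + 1) j) (vF x i j - vF x i (j + 1)) = nuF n m j i) ∧
    (i = n → vF x i j - vF x i (j + 1) = nuF n m j i) := by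
  intro j hj
  induction j, hj using Nat.le_induction with
  | base =>
    intro i hi1 hi2
    have hbb : vF x (i - 1) 1 - vF x i 1 = nuF n m 1 i := by
      have h := hvK (i - 1) 1 le_rfl (by omega) (by omega)
      rw [show i - 1 + 1 = i by omega] at h
      rw [show (1 : ℕ) - 1 = 0 by omega] at h
      rw [Finset.Icc_self, Finset.sum_singleton,
        show Finset.Icc 1 0 = ∅ from Finset.Icc_eq_empty (by omega), Finset.sum_empty,
        sub_zero] at h
      exact h
    constructor
    · intro hin
      rw [(hcrit1 i hi1 hi2).1 hin, hbb]
    · intro hin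
      rw [(hcrit1 i hi1 hi2).2 hin, hbb]
  | succ j hj ih =>
    intro i hi1 hi2
    have hIH : min (vF x (i - 1) j - vF x i j) (vF x (i - 1) j - vF x (i - 1) (j + 1))
        = nuF n m j (i - 1) := by
      have h := (ih (i - 1) (by omega) (by omega)).1 (by omega)
      rwa [show i - 1 + 1 = i by omega] at h
    have hb1 := hvK (i - 1) (j + 1) (by omega) (by omega) (by omega)
    rw [show i - 1 + 1 = i by omega, show j + 1 - 1 = j by omega] at hb1
    have hb2 := hvK (i - 1) j (by omega) (by omega) (by omega)
    rw [show i - 1 + 1 = i by omega] at hb2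
    have hsum1 : ∑ p ∈ Icc 1 (j + 1), nuF n m p i
        = ∑ p ∈ Icc 1 j, nuF n m p i + nuF n m (j + 1) i := sum_Icc_top _ (by omega)
    have hsum2 : ∑ p ∈ Icc 1 j, nuF n m p (i - 1)
        = ∑ p ∈ Icc 1 (j - 1), nuF n m p (i - 1) + nuF n m j (i - 1) :=
      sum_Icc_top' _ (by omega) (by omega)
    have hkey : min (vF x (i - 1) (j + 1) - vF x i (j + 1)) (vF x i j - vF x i (j + 1))
        = nuF n m (j + 1) i := by
      have hXZ : vF x i j - vF x i (j + 1)
          = (vF x (i - 1) j - vF x (i - 1) (j + 1))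
            + (vF x (i - 1) (j + 1) - vF x i (j + 1)) - (vF x (i - 1) j - vF x i j) := by
        ring
      rw [hXZ, min_shift]
      rw [hIH]
      rw [hsum1, hsum2] at hb1
      linarith
    constructor
    · intro hin
      rw [(hcrit2 i (j + 1) (by omega) (by omega) hi2).1 hin]
      rw [show j + 1 - 1 = j by omega]
      exact hkey
    · intro hin
      rw [(hcrit2 i (j + 1) (by omega) (by omega) hi2).2 hin]
      rw [show j + 1 - 1 = j by omega]
      exact hkey

include hn hvK hcrit1 hcrit2 in
lemma bridge_B2 : ∀ d i j, 1 ≤ j → j < i → i ≤ n → n ≤ i + d →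
    vF x i j - vF x i (j + 1)
      = ∑ c ∈ Icc i n, nuF n m j c - ∑ c ∈ Icc (i + 1) n, nuF n m (j + 1) c := by
  have base : ∀ j, 1 ≤ j → j < n →
      vF x n j - vF x n (j + 1)
        = ∑ c ∈ Icc n n, nuF n m j c - ∑ c ∈ Icc (n + 1) n, nuF n m (j + 1) c := by
    intro j hj hjn
    have h := (bridge_B1 n hn m x hvK hcrit1 hcrit2 j hj n hjn le_rfl).2 rfl
    rw [Finset.Icc_self, Finset.sum_singleton,
      show Finset.Icc (n + 1) n = ∅ from Finset.Icc_eq_empty (by omega), Finset.sum_empty,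
      sub_zero]
    exact h
  intro d
  induction d with
  | zero =>
    intro i j hj hji hin hnd
    have : i = n := by omega
    subst this
    exact base j hj hji
  | succ d ih =>
    intro i j hj hji hin hnd
    rcases Nat.eq_or_lt_of_le hin with he | hlt
    · subst he
      exact base j hj hji
    · have hih := ih (i + 1) j hj (by omega) (by omega) (by omega)
      have hb1 := hvK i j hj (by omega) (by omega)
      have hb2 := hvK i (j + 1) (by omega) (by omega) (by omega)
      rw [show j + 1 - 1 = j by omega] at hb2
      have hsum1 : ∑ p ∈ Icc 1 (j + 1), nuF n m p (i + 1)
          = ∑ p ∈ Icc 1 j, nuF n m p (i + 1) + nuF n m (j + 1) (i + 1) :=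
        sum_Icc_top _ (by omega)
      have hsum2 : ∑ p ∈ Icc 1 j, nuF n m p i
          = ∑ p ∈ Icc 1 (j - 1), nuF n m p i + nuF n m j i :=
        sum_Icc_top' _ (by omega) (by omega)
      have hsum3 : ∑ c ∈ Icc i n, nuF n m j c
          = nuF n m j i + ∑ c ∈ Icc (i + 1) n, nuF n m j c := sum_Icc_bot _ (by omega)
      have hsum4 : ∑ c ∈ Icc (i + 1) n, nuF n m (j + 1) c
          = nuF n m (j + 1) (i + 1) + ∑ c ∈ Icc (i + 2) n, nuF n m (j + 1) c := by
        have := sum_Icc_bot (fun c => nuF n m (j + 1) c) (show i + 1 ≤ n by omega)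
        rwa [show i + 1 + 1 = i + 2 by omega] at this
      have hXZ : vF x i j - vF x i (j + 1)
          = (vF x (i + 1) j - vF x (i + 1) (j + 1))
            + (vF x i j - vF x (i + 1) j) - (vF x i (j + 1) - vF x (i + 1) (j + 1)) := by
        ring
      rw [hXZ, hih, hb1, hb2, hsum1, hsum2, hsum3, hsum4]
      ring

include hn hvK hcrit1 hcrit2 in
lemma bridge_TS : ∀ i j, 1 ≤ j → j < i → i ≤ n - 1 →
    0 ≤ (∑ p ∈ Icc 1 j, (nuF n m p (i + 1) - nuF n m p i)) ∧
    0 ≤ (∑ c ∈ Icc (i + 1) n, (nuF n m j c - nuF n m (j + 1) c)) ∧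
    min (∑ p ∈ Icc 1 j, (nuF n m p (i + 1) - nuF n m p i))
      (∑ c ∈ Icc (i + 1) n, (nuF n m j c - nuF n m (j + 1) c)) = 0 := by
  intro i j hj hji hin
  have h5 := (bridge_B1 n hn m x hvK hcrit1 hcrit2 j hj i hji (by omega)).1 hin
  have hb := hvK i j hj (by omega) hin
  have hh := bridge_B2 n hn m x hvK hcrit1 hcrit2 n i j hj hji (by omega) (by omega)
  have hTeq : vF x i j - vF x (i + 1) j - nuF n m j i
      = ∑ p ∈ Icc 1 j, (nuF n m p (i + 1) - nuF n m p i) := by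
    rw [Finset.sum_sub_distrib, hb]
    have := sum_Icc_top' (fun p => nuF n m p i) (show 1 ≤ j by omega) (by omega)
    rw [this]
    ring
  have hSeq : vF x i j - vF x i (j + 1) - nuF n m j i
      = ∑ c ∈ Icc (i + 1) n, (nuF n m j c - nuF n m (j + 1) c) := by
    rw [Finset.sum_sub_distrib, hh]
    have := sum_Icc_bot (fun c => nuF n m j c) (show i ≤ n by omega)
    rw [this]
    ring
  have hmin : min (vF x i j - vF x (i + 1) j - nuF n m j i)
      (vF x i j - vF x i (j + 1) - nuF n m j i) = 0 := by
    rcases le_total (vF x i j - vF x (i + 1) j) (vF x i j - vF x i (j + 1)) with h | h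
    · rw [min_eq_left (by linarith)]
      rw [min_eq_left h] at h5
      linarith
    · rw [min_eq_right (by linarith)]
      rw [min_eq_right h] at h5
      linarith
  rw [hTeq, hSeq] at hmin
  refine ⟨?_, ?_, hmin⟩
  · have := min_le_left (∑ p ∈ Icc 1 j, (nuF n m p (i + 1) - nuF n m p i))
      (∑ c ∈ Icc (i + 1) n, (nuF n m j c - nuF n m (j + 1) c))
    linarith [hmin ▸ this]
  · have := min_le_right (∑ p ∈ Icc 1 j, (nuF n m p (i + 1) - nuF n m p i))
      (∑ c ∈ Icc (i + 1) n, (nuF n m j c - nuF n m (j + 1) c))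
    linarith [hmin ▸ this]

end Bridge2

section LamBridge

variable (n : ℕ) (hn : 2 ≤ n) (lam : ℕ → ℝ) (m : ℕ → PS) (x : ℕ → ℕ → PS)
  (hstarv : ∀ k, 1 ≤ k → k ≤ n → vF x k k = lam k)
  (hvK : ∀ i j, 1 ≤ j → j ≤ i → i ≤ n - 1 →
    vF x i j - vF x (i + 1) j
      = (∑ p ∈ Icc 1 j, nuF n m p (i + 1)) - (∑ p ∈ Icc 1 (j - 1), nuF n m p i))
  (hB2 : ∀ i j, 1 ≤ j → j < i → i ≤ n →
    vF x i j - vF x i (j + 1)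
      = ∑ c ∈ Icc i n, nuF n m j c - ∑ c ∈ Icc (i + 1) n, nuF n m (j + 1) c)

include hn hstarv hvK hB2 in
lemma bridge_lam : ∀ j, 1 ≤ j → j ≤ n - 1 → lam j - lam (j + 1) =
    (∑ c ∈ Icc (j + 1) n, nuF n m j c - ∑ p ∈ Icc 1 (j - 1), nuF n m p j)
      - (∑ c ∈ Icc (j + 2) n, nuF n m (j + 1) c - ∑ p ∈ Icc 1 j, nuF n m p (j + 1)) := by
  intro j hj hjn
  have h1 := hstarv j hj (by omega)
  have h2 := hstarv (j + 1) (by omega) (by omega)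
  have hb := hvK j j hj le_rfl hjn
  have hh := hB2 (j + 1) j hj (by omega) (by omega)
  have hsum : ∑ c ∈ Icc (j + 1) n, nuF n m j c
      = ∑ c ∈ Icc (j + 2) n, nuF n m (j + 1) c
        + (∑ c ∈ Icc (j + 1) n, nuF n m j c - ∑ c ∈ Icc (j + 1 + 1) n, nuF n m (j + 1) c)
        + ∑ c ∈ Icc (j + 2) n, nuF n m (j + 1) c
        - ∑ c ∈ Icc (j + 2) n, nuF n m (j + 1) c := by
    rw [show j + 1 + 1 = j + 2 by omega]
    ring
  rw [show j + 1 + 1 = j + 2 by omega] at hh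
  linarith [hb, hh, h1, h2]

end LamBridge

end Helper14

theorem stmt14 (n : ℕ) (hn : 2 ≤ n) (lam : ℕ → ℝ)
    (hdom : ∀ i, 1 ≤ i → i + 1 ≤ n → lam (i + 1) ≤ lam i)
    (ell : ℝ) (hell : ell = (∑ i ∈ Finset.Icc 1 n, lam i) / n)
    (m : ℕ → PS) (hm : ∀ r, 1 ≤ r → r ≤ n * (n - 1) / 2 → PSpos (m r))
    (x : ℕ → ℕ → PS) (hx : ∀ i j, 1 ≤ j → j ≤ i → i ≤ n → PSpos (x i j))
    (hstar : ∀ k, 1 ≤ k → k ≤ n → x k k = HahnSeries.single (lam k) 1)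
    (hvert : ∀ i j, 1 ≤ j → j ≤ i → i ≤ n - 1 → x i j / x (i + 1) j = Rarr n m i j)
    (hcrit : ∀ i j, 1 ≤ j → j < i → i ≤ n → critCond n x i j) :
    -- the filling n_{ij} := Val_K(m_{s_i + j - i}) is an ideal filling for λ:
    (∀ i j, 1 ≤ i → i < j → j ≤ n → 0 ≤ (m (sIdx n i + (j - i))).order) ∧
    (∀ i j, 1 ≤ i → i < j → j ≤ n → 2 ≤ j - i →
      (m (sIdx n i + (j - i))).order =
        max (m (sIdx n (i + 1) + (j - (i + 1)))).order (m (sIdx n i + (j - 1 - i))).order) ∧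
    (∀ k, 1 ≤ k → k ≤ n →
      (∑ j ∈ Finset.Icc (k + 1) n, (m (sIdx n k + (j - k))).order)
        - (∑ i ∈ Finset.Icc 1 (k - 1), (m (sIdx n i + (k - i))).order) + ell = lam k) := by
  classical
  have hvK := Helper14.bridge_vert n hn m hm x hx hvert
  have hstarv := Helper14.bridge_star n lam x hstar
  have hcrit1 := Helper14.bridge_crit1 n hn x hx hcrit
  have hcrit2 := Helper14.bridge_crit2 n hn x hx hcrit
  have hTS := Helper14.bridge_TS n hn m x hvK hcrit1 hcrit2
  have habm := Helper14.core n (nuF n m) hTS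
  have hchA := Helper14.chainA n (nuF n m) habm
  have hchB := Helper14.chainB n (nuF n m) habm
  have hule := Helper14.u_le n (nuF n m) habm
  have hU2 := Helper14.U2 n (nuF n m) habm
  have hB2' : ∀ i j, 1 ≤ j → j < i → i ≤ n →
      vF x i j - vF x i (j + 1)
        = ∑ c ∈ Finset.Icc i n, nuF n m j c - ∑ c ∈ Finset.Icc (i + 1) n, nuF n m (j + 1) c :=
    fun i j hj hji hin =>
      Helper14.bridge_B2 n hn m x hvK hcrit1 hcrit2 n i j hj hji hin (by omega)
  have hlamEq := Helper14.bridge_lam n hn lam m x hstarv hvK hB2'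
  have hu := Helper14.nonnegSuper n hn (nuF n m) lam hdom habm hchA hchB hule hU2 hlamEq
  refine ⟨?_, ?_, ?_⟩
  · intro i j h1 h2 h3
    have h4 := hu i h1 (by omega)
    have h5 := hchA i (i + 1) j h1 (by omega) (by omega) h3
    show (0 : ℝ) ≤ nuF n m i j
    linarith
  · intro i j h1 h2 h3 h4
    obtain ⟨hA, hB, hM⟩ := habm i j h1 (by omega) h3
    show nuF n m i j = max (nuF n m (i + 1) j) (nuF n m i (j - 1))
    rcases hM with h | h
    · rw [max_eq_right (show nuF n m (i + 1) j ≤ nuF n m i (j - 1) by linarith)]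
      exact h
    · rw [max_eq_left (show nuF n m i (j - 1) ≤ nuF n m (i + 1) j by linarith)]
      exact h
  · intro k h1 h2
    exact Helper14.goal3 n hn (nuF n m) lam ell hell hlamEq k h1 h2
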